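/- If A is an n×n diagonal matrix and B is an n×m nonnegative matrix containing an n×n monomial submatrix, then the continuous-time system x' = Ax + Bu is positively reachable on any interval [t₀,t₁] with t₀ < t₁: every x̄ ∈ ℝⁿ₊ can be reached from x(t₀)=0 at time t₁ with nonnegative controls. -/

import Mathlib

open scoped Matrix Classical
open MeasureTheory

attribute [local instance] Matrix.linftyOpNormedRing Matrix.linftyOpNormedAlgebra

/-- A nonnegative square matrix is monomial: each row and each column contains
exactly one strictly positive entry, all other entries being zero. -/
def IsMonomial {n : ℕ} (A : Matrix (Fin n) (Fin n) ℝ) : Prop :=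
  (∀ i j, 0 ≤ A i j) ∧ (∀ i, ∃! j, 0 < A i j) ∧ (∀ j, ∃! i, 0 < A i j)

theorem diagonal_monomial_implies_positive_reachability (n m : ℕ)
    (A : Matrix (Fin n) (Fin n) ℝ) (hA : A.IsDiag)
    (B : Matrix (Fin n) (Fin m) ℝ) (hB : ∀ i j, 0 ≤ B i j)
    (hmono : ∃ (f : Fin n → Fin m) (c : Fin n → ℝ), (∀ l, 0 < c l) ∧
      ∀ l, (fun p => B p (f l)) = c l • (Pi.single l 1 : Fin n → ℝ)) :
    ∀ t₀ t₁ : ℝ, t₀ < t₁ → ∀ xbar : Fin n → ℝ, (∀ i, 0 ≤ xbar i) →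
      ∃ u : ℝ → Fin m → ℝ, Continuous u ∧ (∀ τ j, 0 ≤ u τ j) ∧
        (∫ τ in t₀..t₁, (NormedSpace.exp ((t₁ - τ) • A)).mulVec (B.mulVec (u τ))) = xbar := by
  obtain ⟨f, c, hc, hcol⟩ := hmono
  intro t₀ t₁ ht xbar hxbar
  set d : Fin n → ℝ := fun i => A i i with hd
  have hAdiag : A = Matrix.diagonal d := by
    ext i j
    by_cases h : i = j
    · subst h; simp [Matrix.diagonal, hd]
    · simp [Matrix.diagonal, h, hA h]
  -- the integral of the exponential in each coordinate
  set I : Fin n → ℝ := fun i => ∫ τ in t₀..t₁, Real.exp ((t₁ - τ) * d i) with hI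
  have hIpos : ∀ i, 0 < I i := by
    intro i
    exact intervalIntegral.intervalIntegral_pos_of_pos
      (Continuous.intervalIntegrable (by fun_prop) _ _) (fun x => Real.exp_pos _) ht
  set k : Fin n → ℝ := fun i => xbar i / (c i * I i) with hk
  have hknonneg : ∀ i, 0 ≤ k i := fun i =>
    div_nonneg (hxbar i) (le_of_lt (mul_pos (hc i) (hIpos i)))
  refine ⟨fun _ j => ∑ l, if f l = j then k l else 0, continuous_const, ?_, ?_⟩
  · intro τ j
    apply Finset.sum_nonneg
    intro l _
    split <;> simp [hknonneg l]
  · -- compute B.mulVec u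
    have hBu : ∀ τ : ℝ, B.mulVec (fun j => ∑ l, if f l = j then k l else 0)
        = fun p => c p * k p := by
      intro τ
      funext p
      simp only [Matrix.mulVec, dotProduct, Finset.mul_sum]
      rw [Finset.sum_comm]
      have : ∀ l : Fin n, (∑ j, B p j * if f l = j then k l else 0)
          = c l * ((Pi.single l (1:ℝ) : Fin n → ℝ) p) * k l := by
        intro l
        rw [Finset.sum_eq_single (f l)]
        · have h := congrFun (hcol l) p
          simp only [Pi.smul_apply, smul_eq_mul] at h
          rw [if_pos rfl, h]
        · intro b _ hb; simp [Ne.symm hb]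
        · intro h; exact absurd (Finset.mem_univ _) h
      simp_rw [this]
      rw [Finset.sum_eq_single p]
      · simp
      · intro b _ hb; simp [Pi.single_apply, hb]
      · intro h; exact absurd (Finset.mem_univ _) h
    have hexp : ∀ τ : ℝ, (NormedSpace.exp ((t₁ - τ) • A))
        = Matrix.diagonal (fun i => Real.exp ((t₁ - τ) * d i)) := by
      intro τ
      rw [hAdiag, ← Matrix.diagonal_smul, Matrix.exp_diagonal]
      congr 1
      funext i
      simp [Pi.exp_def, Real.exp_eq_exp_ℝ, smul_eq_mul]
    have hint : ∀ τ : ℝ, (NormedSpace.exp ((t₁ - τ) • A)).mulVec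
        (B.mulVec (fun j => ∑ l, if f l = j then k l else 0))
        = fun i => Real.exp ((t₁ - τ) * d i) * (c i * k i) := by
      intro τ
      rw [hexp τ, hBu τ]
      funext i
      rw [Matrix.mulVec_diagonal]
    simp_rw [hint]
    funext i
    have hcont : Continuous (fun τ : ℝ => fun i : Fin n =>
        Real.exp ((t₁ - τ) * d i) * (c i * k i)) := by
      apply continuous_pi
      intro i
      exact (Real.continuous_exp.comp (by fun_prop)).mul continuous_const
    have hintg : IntervalIntegrable (fun τ : ℝ => fun i : Fin n =>
        Real.exp ((t₁ - τ) * d i) * (c i * k i)) volume t₀ t₁ :=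
      hcont.intervalIntegrable _ _
    have := (ContinuousLinearMap.proj (R := ℝ) (φ := fun _ : Fin n => ℝ) i
        ).intervalIntegral_comp_comm hintg
    simp only [ContinuousLinearMap.proj_apply] at this
    rw [← this, intervalIntegral.integral_mul_const]
    have : (∫ τ in t₀..t₁, Real.exp ((t₁ - τ) * d i)) = I i := rfl
    rw [this, hk]
    have h1 : I i ≠ 0 := (hIpos i).ne'
    have h2 : c i ≠ 0 := (hc i).ne'
    field_simp
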